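/- arXiv:1507.02074 — 2 statements merged into one kernel-verified Lean document; each statement's English description precedes it below -/
import Mathlib

section
/- Fix κ ∈ (0,1), ξ > 1, 1 ≤ η < ξ, C > 0 and constants 0 < c₁' ≤ c₁ < ∞, c₂ > 0. Let (p_n) be positive integers with p_n/n → κ, let (φ_n) be positive integers with 1 ≤ φ_n ≤ p_n, φ_n → ∞ and (φ_n log n)/n → 0, and let δ_{1,n}, δ_{2,n} > 0 satisfy c₁'/φ_n ≤ δ_{1,n}² ≤ c₁/φ_n and δ_{2,n}² ≤ c₂ n^{-ξ}. For each n let β_1, …, β_{p_n} be i.i.d. random variables drawn from the two-component normal mixture prior: t_j are i.i.d. with P(t_j = 1) = φ_n/p_n, P(t_j = 2) = 1 − φ_n/p_n, and given t_j, β_j ~ N(0, δ_{t_j,n}²). Let B_n = (1/p_n) Σ_{j=1}^{p_n} 1{|β_j| > C n^{-η/2}}. Then for every ζ > 0, P(|B_n − φ_n/p_n| > ζ φ_n/p_n) → 0 as n → ∞. -/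
open MeasureTheory ProbabilityTheory Filter Real
open scoped NNReal ENNReal

lemma gauss_tail_le {v : ℝ≥0} (hv : v ≠ 0) {c : ℝ} (hc : 0 ≤ c) :
    gaussianReal 0 v {x : ℝ | c < |x|} ≤
      ENNReal.ofReal (Real.sqrt 2 * Real.exp (-c ^ 2 / (4 * v))) := by
  have hvpos : (0:ℝ) < v := lt_of_le_of_ne v.coe_nonneg (by exact_mod_cast hv.symm)
  have h2v : (2 * v : ℝ≥0) ≠ 0 := by positivity
  rw [gaussianReal_apply 0 hv]
  have key : ∀ x ∈ {x : ℝ | c < |x|}, gaussianPDF 0 v x ≤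
      ENNReal.ofReal (Real.sqrt 2 * Real.exp (-c ^ 2 / (4 * v))) * gaussianPDF 0 (2 * v) x := by
    intro x hx
    have hx' : c < |x| := hx
    have hreal : gaussianPDFReal 0 v x ≤
        (Real.sqrt 2 * Real.exp (-c ^ 2 / (4 * v))) * gaussianPDFReal 0 (2 * v) x := by
      rw [gaussianPDFReal, gaussianPDFReal]
      have hco : ((2 * v : ℝ≥0) : ℝ) = 2 * (v : ℝ) := by push_cast; ring
      rw [hco]
      have hsq : Real.sqrt (2 * π * (2 * (v:ℝ))) = Real.sqrt 2 * Real.sqrt (2 * π * v) := by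
        rw [← Real.sqrt_mul (by norm_num)]
        ring_nf
      rw [hsq]
      have hπ : (0:ℝ) < Real.sqrt (2 * π * v) := by
        apply Real.sqrt_pos.2; positivity
      have hexp : Real.exp (-(x - 0) ^ 2 / (2 * (v:ℝ))) ≤
          Real.exp (-c ^ 2 / (4 * v)) * Real.exp (-(x - 0) ^ 2 / (2 * (2 * (v:ℝ)))) := by
        rw [← Real.exp_add]
        apply Real.exp_le_exp.2
        have hcx : c ^ 2 ≤ x ^ 2 := by
          have := pow_le_pow_left₀ hc hx'.le 2
          simpa [sq_abs] using this
        rw [div_add_div _ _ (by positivity) (by positivity)]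
        rw [div_le_div_iff₀ (by positivity) (by positivity)]
        nlinarith [mul_pos hvpos hvpos, hcx]
      calc (Real.sqrt (2 * π * v))⁻¹ * Real.exp (-(x - 0) ^ 2 / (2 * (v:ℝ)))
          ≤ (Real.sqrt (2 * π * v))⁻¹ *
            (Real.exp (-c ^ 2 / (4 * v)) * Real.exp (-(x - 0) ^ 2 / (2 * (2 * (v:ℝ))))) := by
            apply mul_le_mul_of_nonneg_left hexp (by positivity)
        _ = Real.sqrt 2 * Real.exp (-c ^ 2 / (4 * v)) *
            ((Real.sqrt 2 * Real.sqrt (2 * π * v))⁻¹ *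
              Real.exp (-(x - 0) ^ 2 / (2 * (2 * (v:ℝ))))) := by
            have h2 : (0:ℝ) < Real.sqrt 2 := by positivity
            field_simp
    calc gaussianPDF 0 v x = ENNReal.ofReal (gaussianPDFReal 0 v x) := rfl
      _ ≤ ENNReal.ofReal ((Real.sqrt 2 * Real.exp (-c ^ 2 / (4 * v))) *
            gaussianPDFReal 0 (2 * v) x) := ENNReal.ofReal_le_ofReal hreal
      _ = ENNReal.ofReal (Real.sqrt 2 * Real.exp (-c ^ 2 / (4 * v))) *
            gaussianPDF 0 (2 * v) x := by
          rw [ENNReal.ofReal_mul (by positivity)]; rfl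
  calc ∫⁻ x in {x : ℝ | c < |x|}, gaussianPDF 0 v x
      ≤ ∫⁻ x in {x : ℝ | c < |x|},
          ENNReal.ofReal (Real.sqrt 2 * Real.exp (-c ^ 2 / (4 * v))) *
            gaussianPDF 0 (2 * v) x :=
        setLIntegral_mono ((measurable_gaussianPDF _ _).const_mul _) key
    _ ≤ ∫⁻ x, ENNReal.ofReal (Real.sqrt 2 * Real.exp (-c ^ 2 / (4 * v))) *
          gaussianPDF 0 (2 * v) x := setLIntegral_le_lintegral _ _
    _ = ENNReal.ofReal (Real.sqrt 2 * Real.exp (-c ^ 2 / (4 * v))) *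
          ∫⁻ x, gaussianPDF 0 (2 * v) x := lintegral_const_mul _ (measurable_gaussianPDF _ _)
    _ = ENNReal.ofReal (Real.sqrt 2 * Real.exp (-c ^ 2 / (4 * v))) := by
        rw [lintegral_gaussianPDF_eq_one 0 h2v, mul_one]

lemma gauss_ball_le {v : ℝ≥0} (hv : v ≠ 0) {c : ℝ} :
    gaussianReal 0 v {x : ℝ | ¬ c < |x|} ≤
      ENNReal.ofReal (2 * c / Real.sqrt (2 * π * v)) := by
  have hvpos : (0:ℝ) < v := lt_of_le_of_ne v.coe_nonneg (by exact_mod_cast hv.symm)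
  have hπ : (0:ℝ) < Real.sqrt (2 * π * v) := by apply Real.sqrt_pos.2; positivity
  have hset : {x : ℝ | ¬ c < |x|} = Set.Icc (-c) c := by
    ext x; simp [not_lt, abs_le]
  rw [gaussianReal_apply 0 hv, hset]
  have key : ∀ x ∈ Set.Icc (-c) c, gaussianPDF 0 v x ≤
      ENNReal.ofReal ((Real.sqrt (2 * π * v))⁻¹) := by
    intro x _
    apply ENNReal.ofReal_le_ofReal
    rw [gaussianPDFReal]
    have : Real.exp (-(x - 0) ^ 2 / (2 * (v:ℝ))) ≤ 1 := by
      rw [← Real.exp_zero]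
      apply Real.exp_le_exp.2
      exact div_nonpos_of_nonpos_of_nonneg (neg_nonpos.2 (sq_nonneg _)) (by positivity)
    nlinarith [inv_nonneg.2 hπ.le]
  calc ∫⁻ x in Set.Icc (-c) c, gaussianPDF 0 v x
      ≤ ∫⁻ _ in Set.Icc (-c) c, ENNReal.ofReal ((Real.sqrt (2 * π * v))⁻¹) :=
        setLIntegral_mono measurable_const key
    _ = ENNReal.ofReal ((Real.sqrt (2 * π * v))⁻¹) * volume (Set.Icc (-c) c) :=
        setLIntegral_const _ _
    _ = ENNReal.ofReal ((Real.sqrt (2 * π * v))⁻¹) * ENNReal.ofReal (c - -c) := by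
        rw [Real.volume_Icc]
    _ ≤ ENNReal.ofReal (2 * c / Real.sqrt (2 * π * v)) := by
        rw [← ENNReal.ofReal_mul (by positivity)]
        apply ENNReal.ofReal_le_ofReal
        rw [div_eq_mul_inv]
        ring_nf
        exact le_refl _

lemma poly_exp_tendsto {a ε : ℝ} (ha : 0 < a) (hε : 0 < ε) :
    Tendsto (fun n : ℕ => (n : ℝ) * Real.exp (-(a * (n : ℝ) ^ ε))) atTop (nhds 0) := by
  have h0 : Tendsto (fun x : ℝ => Real.log x / x ^ ε) atTop (nhds 0) :=
    (isLittleO_log_rpow_atTop hε).tendsto_div_nhds_zero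
  have h1 : Tendsto (fun x : ℝ => x ^ ε * (a - Real.log x / x ^ ε)) atTop atTop :=
    Filter.Tendsto.atTop_mul_pos ha (tendsto_rpow_atTop hε)
      (by simpa using tendsto_const_nhds.sub h0)
  have h2 : Tendsto (fun x : ℝ => a * x ^ ε - Real.log x) atTop atTop := by
    apply h1.congr'
    filter_upwards [eventually_gt_atTop (0:ℝ)] with x hx
    have hxε : x ^ ε ≠ 0 := (Real.rpow_pos_of_pos hx ε).ne'
    field_simp
  have h3 : Tendsto (fun x : ℝ => Real.log x - a * x ^ ε) atTop atBot := by
    have := tendsto_neg_atBot_iff.mpr h2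
    simpa [neg_sub] using this
  have h4 : Tendsto (fun x : ℝ => Real.exp (Real.log x - a * x ^ ε)) atTop (nhds 0) :=
    Real.tendsto_exp_atBot.comp h3
  have h5 := h4.comp tendsto_natCast_atTop_atTop (α := ℕ)
  apply h5.congr'
  filter_upwards [eventually_ge_atTop 1] with n hn
  have hn' : (0:ℝ) < n := by exact_mod_cast hn
  simp only [Function.comp_apply]
  rw [Real.exp_sub, Real.exp_log hn', Real.exp_neg]
  ring


set_option maxHeartbeats 2000000 in
/-- Lemma 1 of the paper. Fix `κ ∈ (0,1)`, `ξ > 1`, `1 ≤ η < ξ`, `C > 0` and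
`0 < c₁' ≤ c₁`, `c₂ > 0`. Let `p n / n → κ`, `1 ≤ φ n ≤ p n`, `φ n → ∞`,
`(φ n · log n)/n → 0`, and let `δ₁ n, δ₂ n > 0` satisfy `c₁'/φ n ≤ δ₁ n ² ≤ c₁/φ n` and
`δ₂ n ² ≤ c₂ n^{-ξ}`. For each `n`, let `β n 1, …, β n (p n)` be i.i.d. from the two-component
normal mixture prior (variance `δ₁ n ²` with probability `φ n / p n`, else variance `δ₂ n ²`),
and let `B n = (1/p n) ∑_j 1{|β n j| > C n^{-η/2}}`. Then for every `ζ > 0`,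
`P(|B n − φ n / p n| > ζ φ n / p n) → 0`. -/
theorem proportion_of_large_coefficients_concentrates
    {Ω : Type*} [MeasurableSpace Ω] (P : Measure Ω) [IsProbabilityMeasure P]
    (κ ξ η C c₁' c₁ c₂ : ℝ)
    (hκ : κ ∈ Set.Ioo (0:ℝ) 1) (hξ : 1 < ξ) (hη₁ : 1 ≤ η) (hηξ : η < ξ)
    (hC : 0 < C) (hc₁' : 0 < c₁') (hc₁ : c₁' ≤ c₁) (hc₂ : 0 < c₂)
    (p φ : ℕ → ℕ) (hp : ∀ n, 0 < p n)
    (hpκ : Tendsto (fun n => (p n : ℝ) / (n : ℝ)) atTop (nhds κ))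
    (hφ₁ : ∀ n, 1 ≤ φ n) (hφp : ∀ n, φ n ≤ p n)
    (hφtop : Tendsto (fun n => (φ n : ℝ)) atTop atTop)
    (hφlog : Tendsto (fun n => (φ n : ℝ) * Real.log n / (n : ℝ)) atTop (nhds 0))
    (δ₁ δ₂ : ℕ → ℝ) (hδ₁pos : ∀ n, 0 < δ₁ n) (hδ₂pos : ∀ n, 0 < δ₂ n)
    (hδ₁lb : ∀ n, c₁' / (φ n : ℝ) ≤ δ₁ n ^ 2) (hδ₁ub : ∀ n, δ₁ n ^ 2 ≤ c₁ / (φ n : ℝ))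
    (hδ₂ub : ∀ n : ℕ, 1 ≤ n → δ₂ n ^ 2 ≤ c₂ * (n : ℝ) ^ (-ξ))
    (β : (n : ℕ) → Fin (p n) → Ω → ℝ)
    (hindep : ∀ n, iIndepFun (β n) P)
    (hlaw : ∀ n (j : Fin (p n)), Measure.map (β n j) P
      = ENNReal.ofReal ((φ n : ℝ) / (p n : ℝ))
          • gaussianReal 0 (Real.toNNReal (δ₁ n ^ 2))
        + ENNReal.ofReal (1 - (φ n : ℝ) / (p n : ℝ))
          • gaussianReal 0 (Real.toNNReal (δ₂ n ^ 2)))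
    (B : (n : ℕ) → Ω → ℝ)
    (hB : ∀ n ω, B n ω
      = (1 / (p n : ℝ)) * ∑ j, if C * (n : ℝ) ^ (-(η / 2)) < |β n j ω| then (1:ℝ) else 0) :
    ∀ ζ : ℝ, 0 < ζ →
      Tendsto
        (fun n => P {ω | ζ * ((φ n : ℝ) / (p n : ℝ)) < |B n ω - (φ n : ℝ) / (p n : ℝ)|})
        atTop (nhds 0) := by
  intro ζ hζ
  have hκ0 : 0 < κ := hκ.1
  -- φ/n → 0
  have hφn : Tendsto (fun n : ℕ => (φ n : ℝ) / n) atTop (nhds 0) := by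
    apply tendsto_of_tendsto_of_tendsto_of_le_of_le' tendsto_const_nhds hφlog
    · exact Eventually.of_forall fun n => by positivity
    · filter_upwards [eventually_ge_atTop 3] with n hn
      have hn3 : (3:ℝ) ≤ n := by exact_mod_cast hn
      have hlog1 : (1:ℝ) ≤ Real.log n := by
        rw [Real.le_log_iff_exp_le (by linarith)]
        have := Real.exp_one_lt_d9
        linarith
      have h1 : (φ n : ℝ) ≤ (φ n : ℝ) * Real.log n :=
        le_mul_of_one_le_right (by positivity) hlog1
      gcongr
  have hsq : Tendsto (fun n : ℕ => Real.sqrt ((φ n : ℝ) / n)) atTop (nhds 0) := by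
    have := (Real.continuous_sqrt.tendsto 0).comp hφn
    rw [Real.sqrt_zero] at this
    exact this
  -- E2
  have hE2 : ∀ᶠ n : ℕ in atTop,
      (2 * C / Real.sqrt (2 * π * c₁')) * Real.sqrt ((φ n : ℝ) / n) < ζ / 4 := by
    have h := hsq.const_mul (2 * C / Real.sqrt (2 * π * c₁'))
    rw [mul_zero] at h
    exact h.eventually_lt_const (by positivity)
  -- E3
  have hE3 : ∀ᶠ n : ℕ in atTop,
      (n : ℝ) * Real.exp (-(C ^ 2 / (4 * c₂) * (n : ℝ) ^ (ξ - η))) <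
        ζ / (4 * Real.sqrt 2 * (κ + 1)) := by
    have h := poly_exp_tendsto (a := C ^ 2 / (4 * c₂)) (ε := ξ - η)
      (by positivity) (by linarith)
    exact h.eventually_lt_const (by positivity)
  -- E4
  have hE4 : ∀ᶠ n : ℕ in atTop, (p n : ℝ) / n < κ + 1 :=
    hpκ.eventually_lt_const (by linarith)
  -- main bound
  have key : ∀ᶠ n : ℕ in atTop,
      P {ω | ζ * ((φ n : ℝ) / (p n : ℝ)) < |B n ω - (φ n : ℝ) / (p n : ℝ)|} ≤
        ENNReal.ofReal ((4 + 2 * ζ) / (ζ ^ 2 * (φ n : ℝ))) := by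
    filter_upwards [hE2, hE3, hE4, eventually_ge_atTop 1] with n hsmall hexp hpn hn1
    have hn0 : (0:ℝ) < n := by exact_mod_cast hn1
    have hnR1 : (1:ℝ) ≤ n := by exact_mod_cast hn1
    have hpR : (0:ℝ) < p n := by exact_mod_cast hp n
    have hφR1 : (1:ℝ) ≤ φ n := by exact_mod_cast hφ₁ n
    have hφR0 : (0:ℝ) < φ n := by linarith
    set r : ℝ := (φ n : ℝ) / (p n : ℝ) with hr_def
    have hr0 : 0 < r := by rw [hr_def]; exact div_pos hφR0 hpR
    have hr1 : r ≤ 1 := by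
      rw [hr_def, div_le_one hpR]
      exact_mod_cast hφp n
    set t : ℝ := ζ * r / 2 with ht_def
    have ht0 : 0 < t := by rw [ht_def]; exact div_pos (mul_pos hζ hr0) two_pos
    set c : ℝ := C * (n : ℝ) ^ (-(η / 2)) with hc_def
    have hc0 : 0 < c := by
      rw [hc_def]
      have := Real.rpow_pos_of_pos hn0 (-(η / 2))
      positivity
    set S : Set ℝ := {x : ℝ | c < |x|} with hS_def
    have hS : MeasurableSet S := measurableSet_lt measurable_const continuous_abs.measurable
    set v₁ : ℝ≥0 := Real.toNNReal (δ₁ n ^ 2) with hv₁_def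
    set v₂ : ℝ≥0 := Real.toNNReal (δ₂ n ^ 2) with hv₂_def
    have hδ₁sq : 0 < δ₁ n ^ 2 := pow_pos (hδ₁pos n) 2
    have hδ₂sq : 0 < δ₂ n ^ 2 := pow_pos (hδ₂pos n) 2
    have hv₁ : v₁ ≠ 0 := by rw [hv₁_def]; exact (Real.toNNReal_pos.2 hδ₁sq).ne'
    have hv₂ : v₂ ≠ 0 := by rw [hv₂_def]; exact (Real.toNNReal_pos.2 hδ₂sq).ne'
    have hv₁R : (v₁ : ℝ) = δ₁ n ^ 2 := by rw [hv₁_def]; exact Real.coe_toNNReal _ hδ₁sq.le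
    have hv₂R : (v₂ : ℝ) = δ₂ n ^ 2 := by rw [hv₂_def]; exact Real.coe_toNNReal _ hδ₂sq.le
    set M : Measure ℝ := ENNReal.ofReal r • gaussianReal 0 v₁
        + ENNReal.ofReal (1 - r) • gaussianReal 0 v₂ with hM_def
    have hlaw' : ∀ j, Measure.map (β n j) P = M := by
      intro j
      rw [hM_def, hr_def, hv₁_def, hv₂_def]
      exact hlaw n j
    have hMuniv : M Set.univ = 1 := by
      rw [hM_def]
      simp only [Measure.add_apply, Measure.smul_apply, smul_eq_mul, measure_univ, mul_one]
      rw [← ENNReal.ofReal_add hr0.le (by linarith)]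
      norm_num
    have haem : ∀ j, AEMeasurable (β n j) P := by
      intro j
      by_contra h
      have h0 := Measure.map_of_not_aemeasurable h
      rw [hlaw' j] at h0
      rw [h0] at hMuniv
      simp at hMuniv
    set g : ℝ → ℝ := S.indicator (fun _ => (1:ℝ)) with hg_def
    have hg : Measurable g := by
      rw [hg_def]; exact measurable_const.indicator hS
    set X : Fin (p n) → Ω → ℝ := fun j => g ∘ β n j with hX_def
    have hXaesm : ∀ j, AEStronglyMeasurable (X j) P := fun j =>
      (hg.comp_aemeasurable (haem j)).aestronglyMeasurable
    have hXmem : ∀ j, MemLp (X j) 2 P := by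
      intro j
      refine memLp_of_bounded (a := (0:ℝ)) (b := (1:ℝ)) (ae_of_all _ fun ω => ?_) (hXaesm j) 2
      by_cases h : β n j ω ∈ S <;>
        simp [hX_def, hg_def, Function.comp, Set.indicator_apply, h, Set.mem_Icc] <;> norm_num
    set q : ℝ := (M S).toReal with hq_def
    have hMS_le_one : M S ≤ 1 := by rw [← hMuniv]; exact measure_mono (Set.subset_univ _)
    have hq0 : 0 ≤ q := ENNReal.toReal_nonneg
    have hq1 : q ≤ 1 := by
      rw [hq_def]
      have := ENNReal.toReal_mono (by norm_num) hMS_le_one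
      simpa using this
    have hEX : ∀ j, ∫ ω, X j ω ∂P = q := by
      intro j
      have h1 : ∫ ω, X j ω ∂P = ∫ y, g y ∂(Measure.map (β n j) P) :=
        (integral_map (haem j) hg.aestronglyMeasurable).symm
      rw [h1, hlaw' j, hg_def, integral_indicator_const (1:ℝ) hS]
      simp [hq_def]
      rfl
    have hXsq : ∀ j, X j ^ 2 = X j := by
      intro j
      funext ω
      by_cases h : β n j ω ∈ S <;>
        simp [hX_def, hg_def, Function.comp, Set.indicator_apply, h]
    have hVarX : ∀ j, variance (X j) P = q - q ^ 2 := by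
      intro j
      rw [variance_eq_sub (hXmem j), hXsq j, hEX j]
    set T : Ω → ℝ := ∑ j, X j with hT_def
    have hTmem : MemLp T 2 P := by
      rw [hT_def]; exact memLp_finset_sum' _ fun j _ => hXmem j
    have hpair : Set.Pairwise ↑(Finset.univ : Finset (Fin (p n)))
        fun i j => IndepFun (X i) (X j) P := by
      intro i _ j _ hij
      exact ((hindep n).comp (fun _ => g) fun _ => hg).indepFun hij
    have hVarT : variance T P = (p n : ℝ) * (q - q ^ 2) := by
      rw [hT_def, IndepFun.variance_sum (fun j _ => hXmem j) hpair]
      simp [hVarX, Finset.card_univ]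
      ring
    have hVarT' : variance T P ≤ (p n : ℝ) * q := by
      rw [hVarT]
      have hqq : q - q ^ 2 ≤ q := by nlinarith only [sq_nonneg q]
      exact mul_le_mul_of_nonneg_left hqq hpR.le
    have hET : ∫ ω, T ω ∂P = (p n : ℝ) * q := by
      have h1 : ∫ ω, T ω ∂P = ∑ j, ∫ ω, X j ω ∂P := by
        rw [hT_def]
        simp only [Finset.sum_apply]
        exact integral_finset_sum _ fun j _ => (hXmem j).integrable one_le_two
      rw [h1]
      simp [hEX, Finset.card_univ, mul_comm]
    have hche := meas_ge_le_variance_div_sq (μ := P) hTmem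
      (c := (p n : ℝ) * t) (by positivity)
    rw [hET] at hche
    -- Gaussian estimates
    have hqsplit : M S = ENNReal.ofReal r * gaussianReal 0 v₁ S
        + ENNReal.ofReal (1 - r) * gaussianReal 0 v₂ S := by
      rw [hM_def]; simp [Measure.add_apply, Measure.smul_apply, smul_eq_mul]
    set G₁ : ℝ := (gaussianReal 0 v₁ S).toReal with hG₁_def
    set G₂ : ℝ := (gaussianReal 0 v₂ S).toReal with hG₂_def
    have hG₁0 : 0 ≤ G₁ := ENNReal.toReal_nonneg
    have hG₂0 : 0 ≤ G₂ := ENNReal.toReal_nonneg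
    have hG₁1 : G₁ ≤ 1 := by
      rw [hG₁_def]
      have := ENNReal.toReal_mono (by norm_num) (prob_le_one (μ := gaussianReal 0 v₁) (s := S))
      simpa using this
    have hq_eq : q = r * G₁ + (1 - r) * G₂ := by
      rw [hq_def, hqsplit, ENNReal.toReal_add
          (ENNReal.mul_ne_top ENNReal.ofReal_ne_top (measure_ne_top _ _))
          (ENNReal.mul_ne_top ENNReal.ofReal_ne_top (measure_ne_top _ _)),
        ENNReal.toReal_mul, ENNReal.toReal_mul,
        ENNReal.toReal_ofReal hr0.le, ENNReal.toReal_ofReal (by linarith : (0:ℝ) ≤ 1 - r)]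
    have hG₁b : 1 - G₁ ≤ ζ / 4 := by
      have hcompl : (gaussianReal 0 v₁) Sᶜ = 1 - gaussianReal 0 v₁ S := by
        rw [measure_compl hS (measure_ne_top _ _), measure_univ]
      have h1G : 1 - G₁ = ((gaussianReal 0 v₁) Sᶜ).toReal := by
        rw [hcompl, ENNReal.toReal_sub_of_le prob_le_one ENNReal.one_ne_top]
        simp [hG₁_def]
      have hball : (gaussianReal 0 v₁) Sᶜ ≤
          ENNReal.ofReal (2 * c / Real.sqrt (2 * π * v₁)) := by
        have hSc : Sᶜ = {x : ℝ | ¬ c < |x|} := by rw [hS_def]; ext x; simp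
        rw [hSc]
        exact gauss_ball_le hv₁
      have h1G' : 1 - G₁ ≤ 2 * c / Real.sqrt (2 * π * (v₁:ℝ)) := by
        rw [h1G]
        exact ENNReal.toReal_le_of_le_ofReal (by positivity) hball
      have hφsqrt : (0:ℝ) < Real.sqrt (φ n) := Real.sqrt_pos.2 hφR0
      have hden : Real.sqrt (2 * π * c₁') / Real.sqrt (φ n) ≤ Real.sqrt (2 * π * (v₁:ℝ)) := by
        rw [← Real.sqrt_div (by positivity)]
        apply Real.sqrt_le_sqrt
        rw [hv₁R]
        have hlb := hδ₁lb n
        calc 2 * π * c₁' / (φ n : ℝ) = 2 * π * (c₁' / (φ n : ℝ)) := by ring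
          _ ≤ 2 * π * (δ₁ n ^ 2) := by
              apply mul_le_mul_of_nonneg_left hlb (by positivity)
      have hstep : 2 * c / Real.sqrt (2 * π * (v₁:ℝ)) ≤
          2 * c * Real.sqrt (φ n) / Real.sqrt (2 * π * c₁') := by
        have hpos : 0 < Real.sqrt (2 * π * c₁') / Real.sqrt (φ n) := by positivity
        calc 2 * c / Real.sqrt (2 * π * (v₁:ℝ))
            ≤ 2 * c / (Real.sqrt (2 * π * c₁') / Real.sqrt (φ n)) := by
              gcongr
          _ = 2 * c * Real.sqrt (φ n) / Real.sqrt (2 * π * c₁') := by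
              field_simp
      have hrpow : (n:ℝ) ^ (-(η/2)) * Real.sqrt (φ n) ≤ Real.sqrt ((φ n : ℝ) / n) := by
      -- PLACEHOLDER_RPOW
        have ha1 : (n:ℝ) ^ (-(η/2)) ≤ (n:ℝ) ^ (-(1/2) : ℝ) :=
          Real.rpow_le_rpow_of_exponent_le hnR1 (by linarith)
        have ha2 : (n:ℝ) ^ (-(1/2) : ℝ) = (Real.sqrt n)⁻¹ := by
          rw [Real.rpow_neg hn0.le, Real.sqrt_eq_rpow]
        have ha3 : (Real.sqrt (n:ℝ))⁻¹ * Real.sqrt (φ n) = Real.sqrt ((φ n : ℝ) / n) := by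
          rw [Real.sqrt_div (by positivity : (0:ℝ) ≤ (φ n : ℝ))]
          ring
        calc (n:ℝ) ^ (-(η/2)) * Real.sqrt (φ n)
            ≤ (n:ℝ) ^ (-(1/2) : ℝ) * Real.sqrt (φ n) :=
              mul_le_mul_of_nonneg_right ha1 (Real.sqrt_nonneg _)
          _ = Real.sqrt ((φ n : ℝ) / n) := by rw [ha2, ha3]
      have hchain : 2 * c * Real.sqrt (φ n) / Real.sqrt (2 * π * c₁') ≤
          (2 * C / Real.sqrt (2 * π * c₁')) * Real.sqrt ((φ n : ℝ) / n) := by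
        have hc₁sqrt : 0 < Real.sqrt (2 * π * c₁') := Real.sqrt_pos.2 (by positivity)
        rw [hc_def]
        calc 2 * (C * (n:ℝ) ^ (-(η/2))) * Real.sqrt (φ n) / Real.sqrt (2 * π * c₁')
            = (2 * C / Real.sqrt (2 * π * c₁')) * ((n:ℝ) ^ (-(η/2)) * Real.sqrt (φ n)) := by
              field_simp
          _ ≤ (2 * C / Real.sqrt (2 * π * c₁')) * Real.sqrt ((φ n : ℝ) / n) := by
              apply mul_le_mul_of_nonneg_left hrpow (by positivity)
      linarith only [h1G', hstep, hchain, hsmall.le]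
    have hG₂b : G₂ ≤ ζ / 4 * r := by
      have htail := gauss_tail_le hv₂ hc0.le
      have hG2' : G₂ ≤ Real.sqrt 2 * Real.exp (-c ^ 2 / (4 * (v₂:ℝ))) := by
        rw [hG₂_def]
        refine ENNReal.toReal_le_of_le_ofReal (by positivity) ?_
        rw [hS_def]
        exact htail
      have hcsq : c ^ 2 = C ^ 2 * (n:ℝ) ^ (-η) := by
        rw [hc_def, mul_pow]
        congr 1
        rw [← Real.rpow_natCast ((n:ℝ) ^ (-(η/2))) 2, ← Real.rpow_mul hn0.le]
        norm_num
      have hv2ub : (v₂:ℝ) ≤ c₂ * (n:ℝ) ^ (-ξ) := by rw [hv₂R]; exact hδ₂ub n hn1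
      have hv2pos : (0:ℝ) < (v₂:ℝ) := by rw [hv₂R]; exact hδ₂sq
      have hrpow_pos : (0:ℝ) < (n:ℝ) ^ (-ξ) := Real.rpow_pos_of_pos hn0 _
      have hexpineq : C ^ 2 / (4 * c₂) * (n:ℝ) ^ (ξ - η) ≤ c ^ 2 / (4 * (v₂:ℝ)) := by
        have hsplit : (n:ℝ) ^ (-η) = (n:ℝ) ^ (ξ - η) * (n:ℝ) ^ (-ξ) := by
          rw [← Real.rpow_add hn0]
          congr 1
          ring
        have hq1' : c ^ 2 / (4 * (c₂ * (n:ℝ) ^ (-ξ))) ≤ c ^ 2 / (4 * (v₂:ℝ)) := by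
          gcongr
        have hq2' : c ^ 2 / (4 * (c₂ * (n:ℝ) ^ (-ξ))) =
            C ^ 2 / (4 * c₂) * (n:ℝ) ^ (ξ - η) := by
          rw [hcsq, hsplit]
          field_simp
        linarith only [hq1', hq2']
      have hmono : Real.exp (-c ^ 2 / (4 * (v₂:ℝ))) ≤
          Real.exp (-(C ^ 2 / (4 * c₂) * (n:ℝ) ^ (ξ - η))) := by
        apply Real.exp_le_exp.2
        rw [neg_div]
        linarith only [hexpineq]
      have hpn' : (p n : ℝ) < (κ + 1) * n := by
        rw [div_lt_iff₀ hn0] at hpn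
        linarith only [hpn]
      have hrlb : 1 / ((κ + 1) * (n:ℝ)) ≤ r := by
        rw [hr_def]
        calc 1 / ((κ + 1) * (n:ℝ)) ≤ 1 / (p n : ℝ) := by
              apply one_div_le_one_div_of_le hpR hpn'.le
          _ ≤ (φ n : ℝ) / (p n : ℝ) := by gcongr
      have hkey : Real.sqrt 2 * Real.exp (-(C ^ 2 / (4 * c₂) * (n:ℝ) ^ (ξ - η))) ≤
          ζ / (4 * (κ + 1) * (n:ℝ)) := by
        rw [le_div_iff₀ (by positivity)]
        rw [lt_div_iff₀ (by positivity)] at hexp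
        calc Real.sqrt 2 * Real.exp (-(C ^ 2 / (4 * c₂) * (n:ℝ) ^ (ξ - η)))
              * (4 * (κ + 1) * (n:ℝ))
            = ((n:ℝ) * Real.exp (-(C ^ 2 / (4 * c₂) * (n:ℝ) ^ (ξ - η))))
              * (4 * Real.sqrt 2 * (κ + 1)) := by ring
          _ ≤ ζ := hexp.le
      have hfinal : ζ / (4 * (κ + 1) * (n:ℝ)) ≤ ζ / 4 * r := by
        have heq : ζ / 4 * (1 / ((κ + 1) * (n:ℝ))) = ζ / (4 * (κ + 1) * (n:ℝ)) := by
          rw [div_mul_div_comm, mul_one]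
          ring_nf
        rw [← heq]
        exact mul_le_mul_of_nonneg_left hrlb (by positivity)
      calc G₂ ≤ Real.sqrt 2 * Real.exp (-c ^ 2 / (4 * (v₂:ℝ))) := hG2'
        _ ≤ Real.sqrt 2 * Real.exp (-(C ^ 2 / (4 * c₂) * (n:ℝ) ^ (ξ - η))) :=
            mul_le_mul_of_nonneg_left hmono (Real.sqrt_nonneg _)
        _ ≤ ζ / (4 * (κ + 1) * (n:ℝ)) := hkey
        _ ≤ ζ / 4 * r := hfinal
    have hqr : |q - r| ≤ t := by
      have hA : r * G₁ ≤ r := mul_le_of_le_one_right hr0.le hG₁1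
      have hBb : (1 - r) * G₂ ≤ G₂ := mul_le_of_le_one_left hG₂0 (by linarith)
      have hBn : 0 ≤ (1 - r) * G₂ := mul_nonneg (by linarith) hG₂0
      have hC1 : r * (1 - G₁) ≤ r * (ζ / 4) := mul_le_mul_of_nonneg_left hG₁b hr0.le
      have hzr : 0 ≤ ζ * r := mul_nonneg hζ.le hr0.le
      rw [hq_eq, ht_def, abs_le]
      constructor
      · linarith only [hC1, hBn, hzr]
      · linarith only [hA, hBb, hG₂b, hzr]
    have hq_ub : q ≤ r * (1 + ζ / 2) := by
      have h := (abs_le.1 hqr).2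
      rw [ht_def] at h
      linarith only [h]
    have hsub : {ω | ζ * r < |B n ω - r|} ⊆
        {ω | (p n : ℝ) * t ≤ |T ω - (p n : ℝ) * q|} := by
      intro ω hω
      simp only [Set.mem_setOf_eq] at hω ⊢
      have hTω : T ω = (p n : ℝ) * B n ω := by
        have hX' : ∀ j, X j ω = if c < |β n j ω| then (1:ℝ) else 0 := by
          intro j
          by_cases h : c < |β n j ω| <;>
            simp [hX_def, hg_def, Function.comp, Set.indicator_apply, hS_def,
              Set.mem_setOf_eq, h]
        rw [hB n ω, hT_def]
        simp only [Finset.sum_apply]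
        rw [Finset.sum_congr rfl fun j _ => hX' j, ← hc_def]
        field_simp
      rw [hTω]
      calc (p n : ℝ) * t ≤ (p n : ℝ) * |B n ω - q| := by
            apply mul_le_mul_of_nonneg_left ?_ hpR.le
            have habs : |B n ω - r| ≤ |B n ω - q| + |q - r| := abs_sub_le _ _ _
            have ht' : t = ζ * r / 2 := ht_def
            linarith only [hω, hqr, habs, ht']
        _ = |(p n : ℝ) * B n ω - (p n : ℝ) * q| := by
            rw [← mul_sub, abs_mul, abs_of_pos hpR]
    calc P {ω | ζ * r < |B n ω - r|}
        ≤ P {ω | (p n : ℝ) * t ≤ |T ω - (p n : ℝ) * q|} := measure_mono hsub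
      _ ≤ ENNReal.ofReal (variance T P / ((p n : ℝ) * t) ^ 2) := hche
      _ ≤ ENNReal.ofReal ((4 + 2 * ζ) / (ζ ^ 2 * (φ n : ℝ))) := by
          apply ENNReal.ofReal_le_ofReal
          have hprφ : (p n : ℝ) * r = (φ n : ℝ) := by
            rw [hr_def]; field_simp
          have hpt : (p n : ℝ) * t = ζ * (φ n : ℝ) / 2 := by
            rw [ht_def, ← hprφ]; ring
          have hVub : variance T P ≤ (φ n : ℝ) * (1 + ζ / 2) := by
            calc variance T P ≤ (p n : ℝ) * q := hVarT'
              _ ≤ (p n : ℝ) * (r * (1 + ζ / 2)) :=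
                  mul_le_mul_of_nonneg_left hq_ub hpR.le
              _ = (φ n : ℝ) * (1 + ζ / 2) := by rw [← hprφ]; ring
          rw [hpt, div_le_div_iff₀ (by positivity) (by positivity)]
          have hmul := mul_le_mul_of_nonneg_right hVub
            (by positivity : (0:ℝ) ≤ ζ ^ 2 * (φ n : ℝ))
          linarith only [hmul]
  have hupper : Tendsto (fun n : ℕ => ENNReal.ofReal ((4 + 2 * ζ) / (ζ ^ 2 * (φ n : ℝ))))
      atTop (nhds 0) := by
    have hreal : Tendsto (fun n : ℕ => (4 + 2 * ζ) / (ζ ^ 2 * (φ n : ℝ))) atTop (nhds 0) :=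
      Tendsto.div_atTop tendsto_const_nhds (hφtop.const_mul_atTop (by positivity))
    have := ENNReal.tendsto_ofReal hreal
    simpa using this
  exact tendsto_of_tendsto_of_tendsto_of_le_of_le' tendsto_const_nhds hupper
    (Eventually.of_forall fun n => zero_le) key
end

section
/- Let f = e^ℓ be a probability density function on ℝ such that ℓ is concave, differentiable, and symmetric (ℓ(−x) = ℓ(x) for all x). If ε is a random variable with density f, then ℓ(ε) is integrable and E|ℓ(ε) − ℓ(0)| ≤ 2. -/
open MeasureTheory Real ENNReal

lemma key_exp_ineq (t M : ℝ) (h : t ≤ M) :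
    (M - t) * Real.exp t ≤ Real.exp ((M + t) / 2) := by
  have hg : 0 ≤ M - t := by linarith
  have h1 : M - t ≤ Real.exp ((M - t) / 2) := by
    have h2 := Real.add_one_le_exp ((M - t) / 4)
    have h3 : Real.exp ((M - t) / 2) = Real.exp ((M - t) / 4) * Real.exp ((M - t) / 4) := by
      rw [← Real.exp_add]; ring_nf
    nlinarith [sq_nonneg (1 - (M - t) / 4), Real.exp_pos ((M - t) / 4)]
  calc (M - t) * Real.exp t ≤ Real.exp ((M - t) / 2) * Real.exp t :=
        mul_le_mul_of_nonneg_right h1 (Real.exp_pos t).le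
    _ = Real.exp ((M + t) / 2) := by rw [← Real.exp_add]; ring_nf

/-- Let `f = exp ∘ ℓ` be a probability density on `ℝ` with `ℓ` concave,
differentiable and symmetric. If `ε` is a random variable with density `f`, then `ℓ(ε)` is
integrable and `E|ℓ(ε) − ℓ(0)| ≤ 2`. -/
theorem logconcave_density_deviation_bound
    {Ω : Type*} [MeasurableSpace Ω] (P : Measure Ω) [IsProbabilityMeasure P]
    (ℓ : ℝ → ℝ)
    (hconc : ConcaveOn ℝ Set.univ ℓ)
    (hdiff : Differentiable ℝ ℓ)
    (hsymm : ∀ x, ℓ (-x) = ℓ x)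
    (hdens : ∫ x, Real.exp (ℓ x) = 1)
    (ε : Ω → ℝ)
    (hε : Measure.map ε P
      = volume.withDensity (fun x => ENNReal.ofReal (Real.exp (ℓ x)))) :
    Integrable (fun ω => ℓ (ε ω)) P ∧ ∫ ω, |ℓ (ε ω) - ℓ 0| ∂P ≤ 2 := by
  have hcont : Continuous ℓ := hdiff.continuous
  set M := ℓ 0 with hM
  -- maximum at 0
  have hmax : ∀ x, ℓ x ≤ M := by
    intro x
    have h := hconc.2 (Set.mem_univ x) (Set.mem_univ (-x))
      (by norm_num : (0:ℝ) ≤ 1/2) (by norm_num : (0:ℝ) ≤ 1/2) (by norm_num)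
    have hx : (1/2 : ℝ) • x + (1/2 : ℝ) • (-x) = 0 := by
      rw [smul_eq_mul, smul_eq_mul]; ring
    rw [hx, hsymm x] at h
    simp only [smul_eq_mul] at h
    linarith
  -- midpoint concavity
  have hmid : ∀ x, (M + ℓ x) / 2 ≤ ℓ (x / 2) := by
    intro x
    have h := hconc.2 (Set.mem_univ (0:ℝ)) (Set.mem_univ x)
      (by norm_num : (0:ℝ) ≤ 1/2) (by norm_num : (0:ℝ) ≤ 1/2) (by norm_num)
    have hx : (1/2 : ℝ) • (0:ℝ) + (1/2 : ℝ) • x = x / 2 := by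
      rw [smul_eq_mul, smul_eq_mul]; ring
    rw [hx] at h
    simp only [smul_eq_mul] at h
    linarith
  -- integrability of the density
  have hfexp_int : Integrable (fun x => Real.exp (ℓ x)) := by
    by_contra h
    rw [integral_undef h] at hdens
    norm_num at hdens
  have hfexp_meas : Measurable fun x => (Real.exp (ℓ x)).toNNReal :=
    (measurable_real_toNNReal.comp (Real.continuous_exp.comp hcont).measurable)
  have hwd : volume.withDensity (fun x => ENNReal.ofReal (Real.exp (ℓ x)))
      = volume.withDensity (fun x => ((Real.exp (ℓ x)).toNNReal : ℝ≥0∞)) := rfl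
  -- ε is a.e.-measurable
  have hεmeas : AEMeasurable ε P := by
    by_contra h
    rw [Measure.map_of_not_aemeasurable h] at hε
    have h0 : (volume.withDensity fun x => ENNReal.ofReal (Real.exp (ℓ x))) Set.univ = 1 := by
      rw [withDensity_apply _ MeasurableSet.univ, Measure.restrict_univ,
        ← ofReal_integral_eq_lintegral_ofReal hfexp_int
          (ae_of_all _ fun x => (Real.exp_pos _).le), hdens]
      simp
    rw [← hε] at h0
    simp at h0
  -- the dominating function
  have hdom_int : Integrable (fun x => Real.exp (ℓ (x / 2))) :=
    hfexp_int.comp_div (by norm_num : (2:ℝ) ≠ 0)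
  have hdom_integral : ∫ x, Real.exp (ℓ (x / 2)) = 2 := by
    rw [Measure.integral_comp_div (fun y => Real.exp (ℓ y)) 2, hdens]
    norm_num
  -- pointwise bound
  have hpt : ∀ x, Real.exp (ℓ x) * (M - ℓ x) ≤ Real.exp (ℓ (x / 2)) := by
    intro x
    calc Real.exp (ℓ x) * (M - ℓ x) = (M - ℓ x) * Real.exp (ℓ x) := by ring
      _ ≤ Real.exp ((M + ℓ x) / 2) := key_exp_ineq _ _ (hmax x)
      _ ≤ Real.exp (ℓ (x / 2)) := Real.exp_le_exp.2 (hmid x)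
  have hpt_nonneg : ∀ x, 0 ≤ Real.exp (ℓ x) * (M - ℓ x) := fun x =>
    mul_nonneg (Real.exp_pos _).le (by linarith [hmax x])
  -- integrability of x ↦ exp(ℓ x) * (M - ℓ x)
  have hG_meas : AEStronglyMeasurable (fun x => Real.exp (ℓ x) * (M - ℓ x)) volume :=
    ((Real.continuous_exp.comp hcont).mul (continuous_const.sub hcont)).aestronglyMeasurable
  have hG_int : Integrable (fun x => Real.exp (ℓ x) * (M - ℓ x)) := by
    refine hdom_int.mono' hG_meas (ae_of_all _ fun x => ?_)
    rw [Real.norm_eq_abs, abs_of_nonneg (hpt_nonneg x)]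
    exact hpt x
  have hG_bound : ∫ x, Real.exp (ℓ x) * (M - ℓ x) ≤ 2 := by
    calc ∫ x, Real.exp (ℓ x) * (M - ℓ x) ≤ ∫ x, Real.exp (ℓ (x / 2)) :=
          integral_mono hG_int hdom_int hpt
      _ = 2 := hdom_integral
  -- transfer to P
  have hsmul : (fun x => (Real.exp (ℓ x)).toNNReal • (M - ℓ x))
      = fun x => Real.exp (ℓ x) * (M - ℓ x) := by
    funext x
    rw [NNReal.smul_def, Real.coe_toNNReal _ (Real.exp_pos _).le, smul_eq_mul]
  have hMl_meas : AEStronglyMeasurable (fun x => M - ℓ x) (Measure.map ε P) :=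
    (continuous_const.sub hcont).aestronglyMeasurable
  have hInt_map : Integrable (fun x => M - ℓ x) (Measure.map ε P) := by
    rw [hε, hwd]
    exact (integrable_withDensity_iff_integrable_smul hfexp_meas).2 (by rw [hsmul]; exact hG_int)
  have hInt_P : Integrable (fun ω => M - ℓ (ε ω)) P :=
    (integrable_map_measure hMl_meas hεmeas).mp hInt_map
  have hint1 : Integrable (fun ω => ℓ (ε ω)) P := by
    have : (fun ω => ℓ (ε ω)) = fun ω => M - (M - ℓ (ε ω)) := by funext ω; ring
    rw [this]
    exact (integrable_const M).sub hInt_P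
  refine ⟨hint1, ?_⟩
  have habs : (fun ω => |ℓ (ε ω) - M|) = fun ω => M - ℓ (ε ω) := by
    funext ω
    rw [abs_sub_comm, abs_of_nonneg (by linarith [hmax (ε ω)])]
  rw [habs]
  have hchg : ∫ ω, (M - ℓ (ε ω)) ∂P = ∫ x, (M - ℓ x) ∂(Measure.map ε P) :=
    (integral_map hεmeas hMl_meas).symm
  rw [hchg, hε, hwd, integral_withDensity_eq_integral_smul hfexp_meas, hsmul]
  exact hG_bound
end
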